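/- det(B_n) = Σ_{k=1}^{n} w(k) μ(k), where μ is the Möbius function. -/
import Mathlib


/-- The Dirichlet matrix `D_n` for `a ≡ 1`: its `(i,j)` entry (with `1 ≤ i, j ≤ n`,
realized via `Fin n` shifted by one) is `1` if `i ∣ j` and `0` otherwise. -/
def Dmat (n : ℕ) : Matrix (Fin n) (Fin n) ℂ :=
  fun i j => if (i.val + 1) ∣ (j.val + 1) then 1 else 0

/-- The weight matrix `W_n`: its `(i,1)` entry is `w i` for `2 ≤ i ≤ n`
and all other entries are `0`. -/
def Wmat (n : ℕ) (w : ℕ → ℂ) : Matrix (Fin n) (Fin n) ℂ :=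
  fun i j => if j.val = 0 ∧ i.val ≠ 0 then w (i.val + 1) else 0

/-- `B_n = W_n + D_n` (the case `a ≡ 1` of the matrix `A_n`). -/
def Bmat (n : ℕ) (w : ℕ → ℂ) : Matrix (Fin n) (Fin n) ℂ :=
  Wmat n w + Dmat n

open ArithmeticFunction Finset

lemma sum_divisors_moebius (q : ℕ) :
    ∑ d ∈ q.divisors, (moebius d : ℤ) = if q = 1 then 1 else 0 := by
  have h := congrArg (fun f : ArithmeticFunction ℤ => f q) moebius_mul_coe_zeta
  simp only [coe_mul_zeta_apply, ArithmeticFunction.one_apply] at h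
  exact h

def Mmat (n : ℕ) : Matrix (Fin n) (Fin n) ℂ :=
  fun i j => if (i.val + 1) ∣ (j.val + 1) then (moebius ((j.val + 1) / (i.val + 1)) : ℂ) else 0

lemma Mmat_mul_Dmat (n : ℕ) : Mmat n * Dmat n = 1 := by
  ext i j
  rw [Matrix.mul_apply, Matrix.one_apply]
  have step1 : ∀ k : Fin n, Mmat n i k * Dmat n k j =
      if (i.val + 1) ∣ (k.val + 1) ∧ (k.val + 1) ∣ (j.val + 1)
      then (moebius ((k.val + 1) / (i.val + 1)) : ℂ) else 0 := by
    intro k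
    simp only [Mmat, Dmat]
    by_cases h1 : (i.val + 1) ∣ (k.val + 1) <;> by_cases h2 : (k.val + 1) ∣ (j.val + 1) <;>
      simp [h1, h2]
  simp_rw [step1]
  rw [Fin.sum_univ_eq_sum_range (fun k =>
      if (i.val + 1) ∣ (k + 1) ∧ (k + 1) ∣ (j.val + 1)
      then (moebius ((k + 1) / (i.val + 1)) : ℂ) else 0)]
  by_cases h : (i.val + 1) ∣ (j.val + 1)
  · obtain ⟨q, hq⟩ := h
    have hq0 : q ≠ 0 := by
      rintro rfl; simp at hq
    rw [← Finset.sum_filter]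
    have key : ∑ k ∈ (Finset.range n).filter
        (fun k => (i.val + 1) ∣ (k + 1) ∧ (k + 1) ∣ (j.val + 1)),
        (moebius ((k + 1) / (i.val + 1)) : ℂ)
        = ∑ m ∈ q.divisors, (moebius m : ℂ) := by
      apply Finset.sum_nbij' (i := fun k => (k + 1) / (i.val + 1))
        (j := fun m => (i.val + 1) * m - 1)
      · intro k hk
        simp only [Finset.mem_filter, Finset.mem_range] at hk
        obtain ⟨hkn, ⟨m, hm⟩, hdvd⟩ := hk
        rw [Nat.mem_divisors]
        constructor
        · rw [hm, Nat.mul_div_cancel_left _ (Nat.succ_pos _)]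
          rw [hm, hq] at hdvd
          exact (mul_dvd_mul_iff_left (Nat.succ_ne_zero i.val)).mp hdvd
        · exact hq0
      · intro m hm
        rw [Nat.mem_divisors] at hm
        have hm0 : 0 < m := Nat.pos_of_ne_zero (ne_zero_of_dvd_ne_zero hm.2 hm.1)
        have hs : (i.val + 1) * m - 1 + 1 = (i.val + 1) * m := by
          have : 0 < (i.val + 1) * m := Nat.mul_pos (Nat.succ_pos _) hm0
          omega
        simp only [Finset.mem_filter, Finset.mem_range, hs]
        refine ⟨?_, Dvd.intro m rfl, ?_⟩
        · have hle : (i.val + 1) * m ≤ (i.val + 1) * q :=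
            Nat.mul_le_mul_left _ (Nat.le_of_dvd (Nat.pos_of_ne_zero hq0) hm.1)
          have hjn : j.val + 1 ≤ n := j.isLt
          omega
        · rw [hq]
          exact mul_dvd_mul_left _ hm.1
      · intro k hk
        simp only [Finset.mem_filter, Finset.mem_range] at hk
        obtain ⟨hkn, ⟨m, hm⟩, hdvd⟩ := hk
        rw [hm, Nat.mul_div_cancel_left _ (Nat.succ_pos _)]
        omega
      · intro m hm
        rw [Nat.mem_divisors] at hm
        have hm0 : 0 < m := Nat.pos_of_ne_zero (ne_zero_of_dvd_ne_zero hm.2 hm.1)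
        have hs : (i.val + 1) * m - 1 + 1 = (i.val + 1) * m := by
          have : 0 < (i.val + 1) * m := Nat.mul_pos (Nat.succ_pos _) hm0
          omega
        rw [hs, Nat.mul_div_cancel_left _ (Nat.succ_pos _)]
      · intro k hk
        simp only [Finset.mem_filter, Finset.mem_range] at hk
        rfl
    rw [key]
    have : ∑ m ∈ q.divisors, (moebius m : ℂ) = ((∑ m ∈ q.divisors, (moebius m : ℤ) : ℤ) : ℂ) := by
      push_cast; rfl
    rw [this, sum_divisors_moebius]
    have hiff : q = 1 ↔ i = j := by
      constructor
      · rintro rfl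
        exact Fin.ext (by omega)
      · rintro rfl
        have : i.val + 1 = (i.val + 1) * q := hq
        nlinarith [Nat.pos_of_ne_zero hq0]
    by_cases hq1 : q = 1
    · simp [hq1, hiff.mp hq1]
    · have hij : i ≠ j := fun hij => hq1 (hiff.mpr hij)
      simp [hq1, hij]
  · have hij : i ≠ j := by
      rintro rfl; exact h dvd_rfl
    rw [if_neg hij]
    apply Finset.sum_eq_zero
    intro k _
    rw [if_neg]
    rintro ⟨h1, h2⟩
    exact h (h1.trans h2)

lemma Mmat_triangular (n : ℕ) : (Mmat n).BlockTriangular id := by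
  intro i j hij
  have hij' : (j : ℕ) < (i : ℕ) := hij
  have : ¬ (i.val + 1) ∣ (j.val + 1) := by
    intro hdvd
    have := Nat.le_of_dvd (Nat.succ_pos _) hdvd
    omega
  simp [Mmat, this]

lemma det_Mmat (n : ℕ) : (Mmat n).det = 1 := by
  rw [Matrix.det_of_upperTriangular (Mmat_triangular n)]
  apply Finset.prod_eq_one
  intro i _
  simp [Mmat]

/-- `det B_n = ∑_{k=1}^{n} w k * μ k`, where `μ` is the Möbius function. -/
theorem det_Bmat (n : ℕ) (hn : 1 ≤ n) (w : ℕ → ℂ) (hw : w 1 = 1) :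
    (Bmat n w).det = ∑ k ∈ Finset.Icc 1 n, w k * (ArithmeticFunction.moebius k : ℂ) := by
  set z : Fin n := ⟨0, hn⟩ with hz
  set c : Fin n → ℂ := fun i => (Mmat n * Wmat n w + 1) i z with hc
  have h1 : (Bmat n w).det = (Mmat n * Bmat n w).det := by
    rw [Matrix.det_mul, det_Mmat, one_mul]
  have h2 : Mmat n * Bmat n w = Mmat n * Wmat n w + 1 := by
    rw [Bmat, Matrix.mul_add, Mmat_mul_Dmat]
  have h3 : Mmat n * Wmat n w + 1 = (1 : Matrix (Fin n) (Fin n) ℂ).updateCol z c := by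
    ext i j
    by_cases hj : j = z
    · subst hj
      rw [Matrix.updateCol_self]
    · rw [Matrix.updateCol_ne hj]
      have hjv : j.val ≠ 0 := fun h0 => hj (Fin.ext h0)
      suffices h : (Mmat n * Wmat n w) i j = 0 by
        simp [h]
      rw [Matrix.mul_apply]
      apply Finset.sum_eq_zero
      intro k _
      simp [Wmat, hjv]
    -- done
  have h4 : ((1 : Matrix (Fin n) (Fin n) ℂ).updateCol z c).det = c z := by
    rw [← Matrix.cramer_apply, Matrix.cramer_one]
    rfl
  rw [h1, h2, h3, h4]
  have hcz : c z = (∑ k : Fin n, (if k.val ≠ 0 then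
      (ArithmeticFunction.moebius (k.val + 1) : ℂ) * w (k.val + 1) else 0)) + 1 := by
    simp only [hc, Matrix.add_apply, Matrix.one_apply_eq, Matrix.mul_apply]
    congr 1
    apply Finset.sum_congr rfl
    intro k _
    simp only [Mmat, Wmat, hz]
    by_cases hk : (k : ℕ) = 0 <;> simp [hk, Nat.one_dvd]
  rw [hcz]
  have hsum : ∑ k ∈ Finset.Icc 1 n, w k * (ArithmeticFunction.moebius k : ℂ)
      = ∑ k : Fin n, w (k.val + 1) * (ArithmeticFunction.moebius (k.val + 1) : ℂ) := by
    rw [← Finset.Ico_add_one_right_eq_Icc, Finset.sum_Ico_eq_sum_range]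
    rw [Fin.sum_univ_eq_sum_range (fun k => w (k + 1) * (ArithmeticFunction.moebius (k + 1) : ℂ))]
    apply Finset.sum_congr rfl
    intro k _
    rw [add_comm 1 k]
  rw [hsum]
  have hsplit : ∑ k : Fin n, w (k.val + 1) * (ArithmeticFunction.moebius (k.val + 1) : ℂ)
      = (∑ k : Fin n, (if k.val ≠ 0 then
        (ArithmeticFunction.moebius (k.val + 1) : ℂ) * w (k.val + 1) else 0))
        + (∑ k : Fin n, (if k = z then w (k.val + 1) * (ArithmeticFunction.moebius (k.val + 1) : ℂ) else 0)) := by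
    rw [← Finset.sum_add_distrib]
    apply Finset.sum_congr rfl
    intro k _
    by_cases hk : k = z
    · subst hk
      simp [hz]
    · have hkv : k.val ≠ 0 := fun h0 => hk (Fin.ext h0)
      simp [hk, hkv, mul_comm]
  rw [hsplit, Finset.sum_ite_eq' Finset.univ z]
  simp [hz, hw]
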